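/- Let G be a group and H a normal subgroup such that H/Z(H) is finite of order k. Then the derived subgroup H' is finite, of order bounded in terms of k. -/

import Mathlib

open Subgroup
open scoped commutatorElement

lemma aux_comm_center {K : Type*} [Group K] (a b z w : K) (hz : z ∈ center K)
    (hw : w ∈ center K) : ⁅a*z, b*w⁆ = ⁅a, b⁆ := by
  have hz' := Subgroup.mem_center_iff.mp hz
  have hw' := Subgroup.mem_center_iff.mp hw
  simp only [commutatorElement_def, mul_inv_rev]
  calc a*z*(b*w)*(z⁻¹*a⁻¹)*(w⁻¹*b⁻¹)
      = a*(z*(b*w)*z⁻¹)*(a⁻¹*w⁻¹)*b⁻¹ := by group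
    _ = a*(b*w)*(a⁻¹*w⁻¹)*b⁻¹ := by rw [← hz' (b*w)]; group
    _ = a*b*(w*a⁻¹*w⁻¹)*b⁻¹ := by group
    _ = a*b*a⁻¹*b⁻¹ := by rw [← hw' a⁻¹]; group

lemma aux_commutatorSet_eq_range (K : Type*) [Group K] :
    commutatorSet K = Set.range
      (fun p : (K ⧸ center K) × (K ⧸ center K) => ⁅p.1.out, p.2.out⁆) := by
  ext x
  constructor
  · rintro ⟨a, b, rfl⟩
    refine ⟨(QuotientGroup.mk a, QuotientGroup.mk b), ?_⟩
    have ha : a⁻¹ * (QuotientGroup.mk a : K ⧸ center K).out ∈ center K := by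
      rw [← QuotientGroup.eq]
      exact (QuotientGroup.out_eq' _).symm
    have hb : b⁻¹ * (QuotientGroup.mk b : K ⧸ center K).out ∈ center K := by
      rw [← QuotientGroup.eq]
      exact (QuotientGroup.out_eq' _).symm
    have ea : (QuotientGroup.mk a : K ⧸ center K).out
        = a * (a⁻¹ * (QuotientGroup.mk a : K ⧸ center K).out) := by group
    have eb : (QuotientGroup.mk b : K ⧸ center K).out
        = b * (b⁻¹ * (QuotientGroup.mk b : K ⧸ center K).out) := by group
    show ⁅_, _⁆ = _
    rw [ea, eb, aux_comm_center _ _ _ _ ha hb]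
  · rintro ⟨p, rfl⟩
    exact ⟨p.1.out, p.2.out, rfl⟩

lemma aux_mono : Monotone Subgroup.cardCommutatorBound := by
  intro m n h
  unfold Subgroup.cardCommutatorBound
  rcases Nat.eq_zero_or_pos n with rfl | hn
  · interval_cases m; rfl
  · have h1 : m^(2*m) ≤ n^(2*n) :=
      le_trans (Nat.pow_le_pow_left h _) (Nat.pow_le_pow_right hn (by omega))
    have h2 : m^(2*m+1) ≤ n^(2*n+1) :=
      le_trans (Nat.pow_le_pow_left h _) (Nat.pow_le_pow_right hn (by omega))
    calc (m^(2*m))^(m^(2*m+1)+1) ≤ (n^(2*n))^(m^(2*m+1)+1) := Nat.pow_le_pow_left h1 _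
      _ ≤ (n^(2*n))^(n^(2*n+1)+1) := Nat.pow_le_pow_right (Nat.pow_pos hn) (by omega)

/-- Schur's theorem: if `H` is a normal subgroup of `G` with `H/Z(H)` finite of
order `k`, then the derived subgroup `H'` is finite of `k`-bounded order. -/
theorem stmt_18 :
    ∃ f : ℕ → ℕ, ∀ k : ℕ, ∀ (G : Type) [Group G] (H : Subgroup G), H.Normal →
      Finite (H ⧸ Subgroup.center H) → Nat.card (H ⧸ Subgroup.center H) = k →
        Finite (⁅H, H⁆ : Subgroup G) ∧ Nat.card (⁅H, H⁆ : Subgroup G) ≤ f k := by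
  refine ⟨fun k => Subgroup.cardCommutatorBound (k * k), ?_⟩
  intro k G _ H _ hfin hcard
  have hrange := aux_commutatorSet_eq_range H
  have hfin1 : Finite (commutatorSet H) := by
    rw [hrange]; exact Set.finite_range _
  have hcard1 : Nat.card (commutatorSet H) ≤ k * k := by
    calc Nat.card (commutatorSet H) ≤ Nat.card ((H ⧸ center H) × (H ⧸ center H)) := by
          rw [hrange]; exact Finite.card_range_le _
      _ = k * k := by rw [Nat.card_prod, hcard]
  have hmap : (⁅H, H⁆ : Subgroup G) = (_root_.commutator H).map H.subtype := by
    rw [_root_.commutator, Subgroup.map_commutator, ← MonoidHom.range_eq_map,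
      Subgroup.range_subtype]
  have hequiv : (_root_.commutator H) ≃ (⁅H, H⁆ : Subgroup G) := by
    rw [hmap]
    exact (Subgroup.equivMapOfInjective _ _ H.subtype_injective).toEquiv
  have hfin2 : Finite (_root_.commutator H) := inferInstance
  refine ⟨Finite.of_equiv _ hequiv, ?_⟩
  rw [← Nat.card_congr hequiv]
  exact le_trans (Subgroup.card_commutator_le_of_finite_commutatorSet H) (aux_mono hcard1)
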